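/- Let n := gcd{ j ∈ {2,…,m} : p_j > 0 }. Then for t ∈ [0, 2π), the derivative of the curve satisfies γ'(t) = 0 if and only if t = 2πk/n for some k ∈ {0, 1, …, n−1}. -/

import Mathlib

open Complex in
lemma aux_gcd_stmt0 (S : Finset ℕ) (t : ℝ)
    (h : ∀ j ∈ S, ∃ k : ℤ, (j : ℝ) * t = k * (2 * Real.pi)) :
    ∃ k : ℤ, ((S.gcd id : ℕ) : ℝ) * t = k * (2 * Real.pi) := by
  classical
  induction S using Finset.induction_on with
  | empty => exact ⟨0, by simp⟩
  | @insert a T ha ih =>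
    obtain ⟨ka, hka⟩ := h a (Finset.mem_insert_self a T)
    obtain ⟨kb, hkb⟩ := ih (fun j hj => h j (Finset.mem_insert_of_mem hj))
    rw [Finset.gcd_insert]
    refine ⟨Nat.gcdA a (T.gcd id) * ka + Nat.gcdB a (T.gcd id) * kb, ?_⟩
    have hg : ((gcd (id a) (T.gcd id) : ℕ) : ℝ)
        = (a : ℝ) * (Nat.gcdA a (T.gcd id) : ℝ)
          + ((T.gcd id : ℕ) : ℝ) * (Nat.gcdB a (T.gcd id) : ℝ) := by
      exact_mod_cast Nat.gcd_eq_gcd_ab a (T.gcd id)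
    rw [hg]
    push_cast
    linear_combination (Nat.gcdA a (T.gcd id) : ℝ) * hka + (Nat.gcdB a (T.gcd id) : ℝ) * hkb

lemma aux_deriv_stmt0 (p : ℕ → ℝ) (m : ℕ) (t : ℝ) :
    HasDerivAt (fun s : ℝ => ∑ j ∈ Finset.range (m + 1),
      (p j : ℂ) * Complex.exp (Complex.I * (1 - (j : ℂ)) * (s : ℂ)))
      (∑ j ∈ Finset.range (m + 1),
        (p j : ℂ) * (Complex.I * (1 - (j : ℂ))) * Complex.exp (Complex.I * (1 - (j : ℂ)) * (t : ℂ))) t := by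
  apply HasDerivAt.fun_sum
  intro j _
  have h1 : HasDerivAt (fun z : ℂ => Complex.exp (Complex.I * (1 - (j : ℂ)) * z))
      (Complex.exp (Complex.I * (1 - (j : ℂ)) * (t : ℂ)) * (Complex.I * (1 - (j : ℂ)))) (t : ℂ) := by
    simpa using ((hasDerivAt_id (t : ℂ)).const_mul (Complex.I * (1 - (j : ℂ)))).cexp
  have h3 := (h1.comp_ofReal).const_mul ((p j : ℂ))
  convert h3 using 1
  rfl
  ring

/-- Let n := gcd{ j ∈ {2,…,m} : p_j > 0 }. Then for t ∈ [0, 2π), the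
derivative of the curve γ(t) = Σ_{j=0}^m p_j e^{i(1−j)t} satisfies γ'(t) = 0 if and only if
t = 2πk/n for some k ∈ {0, 1, …, n−1}. -/
theorem stmt_0
    (m : ℕ) (hm : 2 ≤ m)
    (p : ℕ → ℝ)
    (hp_nonneg : ∀ j, 0 ≤ p j)
    (hp_sum : ∑ j ∈ Finset.range (m + 1), p j = 1)
    (hp0 : 0 < p 0)
    (hp1 : p 1 = 0)
    (hmean : ∑ j ∈ Finset.range (m + 1), (1 - (j : ℝ)) * p j = 0)
    (γ : ℝ → ℂ)
    (hγ : ∀ t : ℝ, γ t = ∑ j ∈ Finset.range (m + 1),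
      (p j : ℂ) * Complex.exp (Complex.I * (1 - (j : ℂ)) * (t : ℂ)))
    (n : ℕ)
    (hn : n = ((Finset.Icc 2 m).filter (fun j => 0 < p j)).gcd id)
    (t : ℝ) (ht : t ∈ Set.Ico 0 (2 * Real.pi)) :
    deriv γ t = 0 ↔ ∃ k, k < n ∧ t = 2 * Real.pi * k / n := by
  classical
  set S : Finset ℕ := (Finset.Icc 2 m).filter (fun j => 0 < p j) with hS_def
  have hSmem : ∀ j, j ∈ S ↔ (2 ≤ j ∧ j ≤ m ∧ 0 < p j) := by
    intro j
    simp [hS_def, Finset.mem_filter, Finset.mem_Icc, and_assoc]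
  have hπ : 0 < Real.pi := Real.pi_pos
  -- S is nonempty
  have hSne : S.Nonempty := by
    by_contra hc
    rw [Finset.not_nonempty_iff_eq_empty] at hc
    have hz : ∀ j, 2 ≤ j → j ≤ m → p j = 0 := by
      intro j h2 hjm
      by_contra hne
      have hpj : 0 < p j := lt_of_le_of_ne (hp_nonneg j) (Ne.symm hne)
      have : j ∈ S := (hSmem j).2 ⟨h2, hjm, hpj⟩
      rw [hc] at this
      exact absurd this (Finset.notMem_empty j)
    have hsum : ∑ j ∈ Finset.range (m + 1), (1 - (j : ℝ)) * p j = p 0 := by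
      rw [Finset.sum_eq_single 0]
      · simp
      · intro j hjr hj0
        rcases Nat.lt_or_ge j 2 with h2 | h2
        · have : j = 1 := by omega
          simp [this, hp1]
        · have hjm : j ≤ m := by
            have := Finset.mem_range.1 hjr; omega
          simp [hz j h2 hjm]
      · intro habs
        exact absurd (Finset.mem_range.2 (by omega)) habs
    rw [hsum] at hmean
    linarith
  -- n is nonzero
  have hn0 : n ≠ 0 := by
    rw [hn]
    intro h
    obtain ⟨j, hj⟩ := hSne
    have h1 := Finset.gcd_eq_zero_iff.1 h j hj
    have h2 := (hSmem j).1 hj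
    simp only [id] at h1
    omega
  have hnpos : (0 : ℝ) < n := by
    exact_mod_cast Nat.pos_of_ne_zero hn0
  -- derivative computation
  have hγfun : γ = fun s : ℝ => ∑ j ∈ Finset.range (m + 1),
      (p j : ℂ) * Complex.exp (Complex.I * (1 - (j : ℂ)) * (s : ℂ)) := funext hγ
  have hder : deriv γ t = ∑ j ∈ Finset.range (m + 1),
      (p j : ℂ) * (Complex.I * (1 - (j : ℂ))) * Complex.exp (Complex.I * (1 - (j : ℂ)) * (t : ℂ)) := by
    rw [hγfun]
    exact (aux_deriv_stmt0 p m t).deriv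
  set T : ℂ := ∑ j ∈ Finset.range (m + 1),
      (p j : ℂ) * (1 - (j : ℂ)) * Complex.exp (-(Complex.I * (j : ℂ) * (t : ℂ))) with hT_def
  have hfact : deriv γ t = Complex.I * Complex.exp (Complex.I * (t : ℂ)) * T := by
    rw [hder, hT_def, Finset.mul_sum]
    apply Finset.sum_congr rfl
    intro j _
    rw [show Complex.I * (1 - (j : ℂ)) * (t : ℂ)
        = Complex.I * (t : ℂ) + -(Complex.I * (j : ℂ) * (t : ℂ)) by ring, Complex.exp_add]
    ring
  have hIne : Complex.I * Complex.exp (Complex.I * (t : ℂ)) ≠ 0 :=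
    mul_ne_zero Complex.I_ne_zero (Complex.exp_ne_zero _)
  have hzero_iff : deriv γ t = 0 ↔ T = 0 := by
    rw [hfact]
    constructor
    · intro h
      rcases mul_eq_zero.1 h with h | h
      · exact absurd h hIne
      · exact h
    · intro h; rw [h, mul_zero]
  -- core condition
  have hC : T = 0 ↔ ∀ j ∈ S, ∃ k : ℤ, (j : ℝ) * t = k * (2 * Real.pi) := by
    constructor
    · intro hT
      have hre : T.re = ∑ j ∈ Finset.range (m + 1), p j * (1 - (j : ℝ)) * Real.cos (j * t) := by
        rw [hT_def, Complex.re_sum]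
        apply Finset.sum_congr rfl
        intro i _
        rw [show -(Complex.I * (i : ℂ) * (t : ℂ)) = ((-((i : ℝ) * t) : ℝ) : ℂ) * Complex.I by
            push_cast; ring,
          show (p i : ℂ) * (1 - (i : ℂ)) = ((p i * (1 - (i : ℝ)) : ℝ) : ℂ) by push_cast; ring,
          Complex.re_ofReal_mul, Complex.exp_ofReal_mul_I_re, Real.cos_neg]
      have h0 : ∑ j ∈ Finset.range (m + 1), p j * (1 - (j : ℝ)) * Real.cos (j * t) = 0 := by
        rw [← hre, hT]
        simp
      have hkey : ∀ i ∈ Finset.range (m + 1), ((i : ℝ) - 1) * p i * (1 - Real.cos (i * t)) = 0 := by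
        apply (Finset.sum_eq_zero_iff_of_nonneg ?_).1
        · have e : ∀ i : ℕ, ((i : ℝ) - 1) * p i * (1 - Real.cos (i * t))
              = (p i * (1 - (i : ℝ)) * Real.cos (i * t)) - (1 - (i : ℝ)) * p i := by
            intro i; ring
          calc ∑ i ∈ Finset.range (m + 1), ((i : ℝ) - 1) * p i * (1 - Real.cos (i * t))
              = ∑ i ∈ Finset.range (m + 1),
                ((p i * (1 - (i : ℝ)) * Real.cos (i * t)) - (1 - (i : ℝ)) * p i) :=
                Finset.sum_congr rfl (fun i _ => e i)
            _ = (∑ i ∈ Finset.range (m + 1), p i * (1 - (i : ℝ)) * Real.cos (i * t))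
                - ∑ i ∈ Finset.range (m + 1), (1 - (i : ℝ)) * p i := Finset.sum_sub_distrib _ _
            _ = 0 := by rw [h0, hmean]; ring
        · intro i _
          rcases Nat.eq_zero_or_pos i with h0' | h0'
          · simp [h0']
          · apply mul_nonneg (mul_nonneg ?_ (hp_nonneg i)) ?_
            · have : (1 : ℝ) ≤ (i : ℝ) := by exact_mod_cast h0'
              linarith
            · linarith [Real.cos_le_one ((i : ℝ) * t)]
      intro j hj
      obtain ⟨hj2, hjm, hpj⟩ := (hSmem j).1 hj
      have hjr : j ∈ Finset.range (m + 1) := Finset.mem_range.2 (by omega)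
      have hterm := hkey j hjr
      have hj1 : (0 : ℝ) < (j : ℝ) - 1 := by
        have : (2 : ℝ) ≤ (j : ℝ) := by exact_mod_cast hj2
        linarith
      have hpos : 0 < ((j : ℝ) - 1) * p j := mul_pos hj1 hpj
      have hcos : Real.cos ((j : ℝ) * t) = 1 := by
        rcases mul_eq_zero.1 hterm with h | h
        · exact absurd h hpos.ne'
        · linarith
      obtain ⟨k, hk⟩ := (Real.cos_eq_one_iff _).1 hcos
      exact ⟨k, hk.symm⟩
    · intro hCond
      have hTeq : T = ((∑ j ∈ Finset.range (m + 1), (1 - (j : ℝ)) * p j : ℝ) : ℂ) := by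
        rw [hT_def, Complex.ofReal_sum]
        apply Finset.sum_congr rfl
        intro j hjr
        by_cases hp : p j = 0
        · simp [hp]
        · rcases Nat.eq_zero_or_pos j with hj0 | hj0
          · subst hj0; push_cast; simp
          · rcases Nat.lt_or_ge j 2 with hj2 | hj2
            · have : j = 1 := by omega
              subst this
              push_cast
              ring
            · have hjm : j ≤ m := by
                have := Finset.mem_range.1 hjr; omega
              have hpj : 0 < p j := lt_of_le_of_ne (hp_nonneg j) (Ne.symm hp)
              have hjS : j ∈ S := (hSmem j).2 ⟨hj2, hjm, hpj⟩
              obtain ⟨k, hk⟩ := hCond j hjS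
              have hk' : ((j : ℕ) : ℂ) * (t : ℂ) = ((k : ℤ) : ℂ) * (2 * (Real.pi : ℂ)) := by
                have h := congrArg (fun x : ℝ => (x : ℂ)) hk
                push_cast at h ⊢
                exact h
              have hexp : Complex.exp (-(Complex.I * (j : ℂ) * (t : ℂ))) = 1 := by
                rw [show -(Complex.I * (j : ℂ) * (t : ℂ))
                    = ((-k : ℤ) : ℂ) * (2 * (Real.pi : ℂ) * Complex.I) from by
                  push_cast
                  linear_combination (-Complex.I) * hk']
                exact Complex.exp_int_mul_two_pi_mul_I _
              rw [hexp]
              push_cast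
              ring
      rw [hTeq, hmean]
      simp
  -- final equivalence
  rw [hzero_iff, hC]
  constructor
  · intro h
    obtain ⟨k, hk⟩ := aux_gcd_stmt0 S t h
    rw [← hn] at hk
    have hk0 : 0 ≤ k := by
      by_contra hneg
      push_neg at hneg
      have hk1 : (k : ℝ) ≤ -1 := by
        have : k ≤ -1 := by omega
        exact_mod_cast this
      nlinarith [ht.1, hk, hnpos]
    have hkn : k < (n : ℤ) := by
      by_contra hge
      push_neg at hge
      have hge' : (n : ℝ) ≤ (k : ℝ) := by exact_mod_cast hge
      have hlt : (n : ℝ) * t < (n : ℝ) * (2 * Real.pi) := (mul_lt_mul_iff_right₀ hnpos).2 ht.2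
      rw [hk] at hlt
      nlinarith
    refine ⟨k.toNat, ?_, ?_⟩
    · have := Int.toNat_of_nonneg hk0
      omega
    · have hkR : ((k.toNat : ℕ) : ℝ) = (k : ℝ) := by
        have := Int.toNat_of_nonneg hk0
        exact_mod_cast congrArg (fun z : ℤ => (z : ℝ)) this
      rw [hkR]
      field_simp
      linarith [hk]
  · rintro ⟨k, hkn, hteq⟩ j hjS
    have hnj : n ∣ j := by
      rw [hn]
      exact Finset.gcd_dvd hjS
    obtain ⟨c, hc⟩ := hnj
    refine ⟨(c * k : ℕ), ?_⟩
    rw [hteq, hc]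
    push_cast
    field_simp
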